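/- Fix ε ∈ {+1, −1} and define a partition p = [p_1^{r_1},...,p_N^{r_N}] of n (with p_i distinct and r_i the multiplicity of p_i) to be of type ε if r_i is even whenever (−1)^{p_i} = ε. Then for every partition p of n such that the set of type-ε partitions of n dominated by p is nonempty, this set has a unique maximal element with respect to the dominance order (the ε-collapse of p). -/

import Mathlib

/-- Sum of the `t` largest elements of a multiset of naturals. -/
def sumLargest (M : Multiset ℕ) (t : ℕ) : ℕ := (((M.sort (· ≤ ·)).reverse).take t).sum

/-- Dominance order: for every `t`, the sum of the `t` largest parts of `M` is at least
that of `N`. -/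
def Dom (M N : Multiset ℕ) : Prop := ∀ t, sumLargest N t ≤ sumLargest M t

/-- A partition (multiset of parts) is of type `ε` if every part `m` with `(-1)^m = ε`
occurs with even multiplicity. -/
def IsTypeEps (ε : ℤ) (M : Multiset ℕ) : Prop :=
  ∀ m : ℕ, ((-1 : ℤ) ^ m = ε) → Even (M.count m)

namespace Stmt6

/-- slope of a partial-sum function -/
def dd (f : ℕ → ℕ) (t : ℕ) : ℕ := f (t+1) - f t

/-- `f` is the partial-sum function of a partition of `n`. -/
structure GoodF (n : ℕ) (f : ℕ → ℕ) : Prop where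
  zero : f 0 = 0
  mono : ∀ t, f t ≤ f (t+1)
  conc : ∀ t, f (t+2) + f t ≤ f (t+1) + f (t+1)
  le_n : ∀ t, f t ≤ n
  top : f n = n

def CornerF (f : ℕ → ℕ) (t : ℕ) : Prop := f (t-1) + f (t+1) < f t + f t

def POK (e : ℕ) (f : ℕ → ℕ) : Prop := ∀ t, CornerF f t → Even (f t + e * t)

variable {n : ℕ} {f : ℕ → ℕ}

lemma GoodF.dd_add (h : GoodF n f) (t : ℕ) : f (t+1) = f t + dd f t := by
  have := h.mono t; unfold dd; omega

lemma GoodF.dd_succ_le (h : GoodF n f) (t : ℕ) : dd f (t+1) ≤ dd f t := by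
  have h1 := h.conc t; have h2 := h.mono t; have h3 := h.mono (t+1); unfold dd
  rw [show t+1+1 = t+2 from rfl]; omega

lemma GoodF.dd_anti (h : GoodF n f) : Antitone (dd f) :=
  antitone_nat_of_succ_le h.dd_succ_le

lemma GoodF.mono_le (h : GoodF n f) : Monotone f :=
  monotone_nat_of_le_succ h.mono

lemma GoodF.stable (h : GoodF n f) {t : ℕ} (ht : n ≤ t) : f t = n :=
  le_antisymm (h.le_n t) (h.top ▸ h.mono_le ht)

lemma GoodF.dd_stable (h : GoodF n f) {t : ℕ} (ht : n ≤ t) : dd f t = 0 := by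
  unfold dd
  rw [h.stable ht, h.stable (le_trans ht (Nat.le_succ t))]
  omega

/-- slopes before `a+k` are at least `dd f (a+k)`. -/
lemma GoodF.f_ge (h : GoodF n f) (a : ℕ) : ∀ k, f a + (k+1) * dd f (a+k) ≤ f (a+k+1) := by
  intro k
  induction k with
  | zero => rw [h.dd_add a]; simp
  | succ k ih =>
    have h1 : f (a+k+1) + dd f (a+k+1) = f (a+k+2) := (h.dd_add (a+k+1)).symm
    have h2 : dd f (a+k+1) ≤ dd f (a+k) := h.dd_succ_le _
    have h3 : (k+1) * dd f (a+k+1) ≤ (k+1) * dd f (a+k) := Nat.mul_le_mul_left _ h2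
    have : a + (k+1) = a + k + 1 := by omega
    rw [this]
    have := ih
    nlinarith [h2, h3]

lemma corner_succ_iff (h : GoodF n f) (t : ℕ) : CornerF f (t+1) ↔ dd f (t+1) < dd f t := by
  have h1 := h.dd_add t
  have h2 := h.dd_add (t+1)
  unfold CornerF
  simp only [Nat.add_sub_cancel]
  omega

lemma not_corner_zero (h : GoodF n f) : ¬ CornerF f 0 := by
  unfold CornerF
  have := h.mono 0
  simp only [Nat.zero_sub]
  omega

lemma corner_lt (h : GoodF n f) {t : ℕ} (hc : CornerF f t) : f (t-1) < f t := by
  have := h.mono t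
  unfold CornerF at hc
  omega

lemma corner_le_n (h : GoodF n f) {t : ℕ} (hc : CornerF f t) : t ≤ n := by
  by_contra hn
  push_neg at hn
  have h1 : f (t-1) = n := h.stable (by omega)
  have h2 : f t = n := h.stable (by omega)
  have h3 : f (t+1) = n := h.stable (by omega)
  unfold CornerF at hc
  omega

lemma touch {g : ℕ → ℕ} {t : ℕ} (hc : CornerF f t) (hle : ∀ u, g u ≤ f u)
    (heq : g t = f t) : CornerF g t := by
  unfold CornerF at *
  have := hle (t-1); have := hle (t+1)
  omega

lemma GoodF.flat (h : GoodF n f) (a v : ℕ) :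
    ∀ k, (∀ j, j < k → dd f (a + j) = v) → f (a + k) = f a + k * v := by
  intro k
  induction k with
  | zero => simp
  | succ k ih =>
    intro hj
    have h1 : f (a + k + 1) = f (a + k) + dd f (a+k) := h.dd_add _
    have h2 : dd f (a+k) = v := hj k (by omega)
    have h3 := ih (fun j hjk => hj j (by omega))
    have : a + (k+1) = a + k + 1 := by omega
    rw [this, h1, h2, h3]
    ring

lemma GoodF.dd_const_of_no_corner (h : GoodF n f) {a b : ℕ}
    (hnc : ∀ u, a < u → u < b → ¬ CornerF f u) :
    ∀ j, a + j < b → dd f (a + j) = dd f a := by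
  intro j
  induction j with
  | zero => simp
  | succ j ih =>
    intro hb
    have h1 : ¬ CornerF f (a + j + 1) := hnc _ (by omega) (by omega)
    rw [corner_succ_iff h] at h1
    push_neg at h1
    have h2 : dd f (a + j + 1) ≤ dd f (a + j) := h.dd_succ_le _
    have h3 := ih (by omega)
    have : a + (j+1) = a + j + 1 := by omega
    rw [this]
    omega


open Classical in
lemma first_wrong (e : ℕ) (hf : GoodF n f) {t0 : ℕ} (hc : CornerF f t0)
    (hw : ¬ Even (f t0 + e * t0))
    (hmin : ∀ u, u < t0 → CornerF f u → Even (f u + e * u)) :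
    Odd (dd f (t0 - 1) + e) := by
  classical
  have ht0 : 1 ≤ t0 := by
    rcases Nat.eq_zero_or_pos t0 with h0 | h0
    · exact absurd (h0 ▸ hc) (not_corner_zero hf)
    · exact h0
  set tp := Nat.findGreatest (CornerF f) (t0 - 1) with htp
  have htple : tp ≤ t0 - 1 := Nat.findGreatest_le _
  have hQ : tp = 0 ∨ CornerF f tp := by
    by_cases hex : ∃ u, 0 < u ∧ u ≤ t0 - 1 ∧ CornerF f u
    · obtain ⟨u, _, hu2, hu3⟩ := hex
      exact Or.inr (Nat.findGreatest_spec hu2 hu3)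
    · left
      rw [htp, Nat.findGreatest_eq_zero_iff]
      intro m hm1 hm2 hm3
      exact hex ⟨m, hm1, hm2, hm3⟩
  have hnc : ∀ u, tp < u → u < t0 → ¬ CornerF f u := by
    intro u h1 h2 hcu
    exact Nat.findGreatest_is_greatest h1 (by omega) hcu
  have hconst : ∀ j, tp + j < t0 → dd f (tp + j) = dd f tp :=
    hf.dd_const_of_no_corner hnc
  have hdd : dd f (t0 - 1) = dd f tp := by
    have := hconst (t0 - 1 - tp) (by omega)
    rw [show tp + (t0 - 1 - tp) = t0 - 1 by omega] at this
    exact this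
  have hflat : f t0 = f tp + (t0 - tp) * dd f tp := by
    have := hf.flat tp (dd f tp) (t0 - tp) (fun j hj => hconst j (by omega))
    rw [show tp + (t0 - tp) = t0 by omega] at this
    exact this
  have hptp : Even (f tp + e * tp) := by
    rcases hQ with h0 | hcor
    · rw [h0, hf.zero]; simp
    · exact hmin tp (by omega) hcor
  -- parity combine
  have hkey : f t0 + e * t0 = (f tp + e * tp) + (dd f tp + e) * (t0 - tp) := by
    have h : e * t0 = e * tp + e * (t0 - tp) := by
      rw [← Nat.mul_add]
      congr 1
      omega
    rw [hflat, h]; ring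
  rw [hkey] at hw
  rw [Nat.even_add, iff_iff_implies_and_implies] at hw
  have hodd : Odd ((dd f tp + e) * (t0 - tp)) := by
    rcases Nat.even_or_odd ((dd f tp + e) * (t0 - tp)) with hev | hod
    · exact absurd hptp (by tauto)
    · exact hod
  rw [Nat.odd_mul] at hodd
  rw [hdd]
  exact hodd.1

lemma step (e : ℕ) (hf : GoodF n f) {t0 t1 : ℕ}
    (ht0 : 1 ≤ t0) (ht01 : t0 ≤ t1)
    (hc0 : CornerF f t0)
    (hw0 : ¬ Even (f t0 + e * t0))
    (hw1 : ¬ Even (f t1 + e * t1))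
    (hc1 : CornerF f t1)
    (hlin : ∀ k, t0 + k ≤ t1 → f (t0 + k) = f t0 + k * dd f t0)
    (hint : t0 < t1 → Even (dd f t0 + e))
    (hsl1 : t0 < t1 → dd f t0 + 1 ≤ dd f (t0 - 1) ∧ dd f t1 + 1 ≤ dd f t0)
    (hsl2 : t1 = t0 → dd f t0 + 2 ≤ dd f (t0 - 1)) :
    ∃ f', GoodF n f' ∧ (∀ t, f' t ≤ f t) ∧ f' t0 < f t0 ∧
      ∀ g, GoodF n g → POK e g → (∀ u, g u ≤ f u) → ∀ t, g t ≤ f' t := by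
  classical
  have hddlin : ∀ u, t0 ≤ u → u < t1 → dd f u = dd f t0 := by
    intro u h1 h2
    obtain ⟨k, rfl⟩ := Nat.exists_eq_add_of_le h1
    have e1 := hlin k (by omega)
    have e2 := hlin (k+1) (by omega)
    have e3 := hf.dd_add (t0 + k)
    rw [show t0 + (k+1) = t0 + k + 1 from rfl] at e2
    rw [e2, e1] at e3
    have : (k+1) * dd f t0 = k * dd f t0 + dd f t0 := by ring
    omega
  have hft1 : f t1 = f t0 + (t1 - t0) * dd f t0 := by
    have := hlin (t1 - t0) (by omega)
    rw [show t0 + (t1 - t0) = t1 by omega] at this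
    exact this
  have hvpos : 2 ≤ dd f (t0 - 1) := by
    rcases eq_or_lt_of_le ht01 with heq | hlt
    · have := hsl2 heq.symm; omega
    · have := hsl1 hlt; omega
  have hfget0 : t0 * dd f (t0 - 1) ≤ f t0 := by
    have := hf.f_ge 0 (t0 - 1)
    rw [hf.zero] at this
    rw [show (0:ℕ) + (t0 - 1) = t0 - 1 by omega] at this
    rw [show t0 - 1 + 1 = t0 by omega] at this
    omega
  have ht0f : t0 + 1 ≤ f t0 := by
    have h2 : t0 * 2 ≤ t0 * dd f (t0 - 1) := Nat.mul_le_mul_left _ hvpos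
    omega
  have ht1f : t1 + 1 ≤ f t1 := by
    rcases eq_or_lt_of_le ht01 with heq | hlt
    · rw [← heq]; omega
    · have hs1 : 1 ≤ dd f t0 := by have := hsl1 hlt; omega
      have : (t1 - t0) * 1 ≤ (t1 - t0) * dd f t0 := Nat.mul_le_mul_left _ hs1
      omega
  have ht1n : t1 < n := by have := hf.le_n t1; omega
  have hf01 : f (t0 - 1) + 1 ≤ f t0 := corner_lt hf hc0
  have hmc0 : f (t0 - 1) + f (t0 + 1) + 1 ≤ f t0 + f t0 := hc0
  have hft0pos : 1 ≤ f t0 := by omega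
  set f' : ℕ → ℕ := fun t => if t0 ≤ t ∧ t ≤ t1 then f t - 1 else f t with hf'def
  have hin : ∀ t, t0 ≤ t → t ≤ t1 → f' t = f t - 1 := by
    intro t h1 h2; simp only [hf'def, if_pos (And.intro h1 h2)]
  have hout : ∀ t, ¬ (t0 ≤ t ∧ t ≤ t1) → f' t = f t := by
    intro t h; simp only [hf'def, if_neg h]
  have hle' : ∀ t, f' t ≤ f t := by
    intro t
    by_cases h : t0 ≤ t ∧ t ≤ t1
    · rw [hin t h.1 h.2]; omega
    · rw [hout t h]
  have hfget : ∀ t, t0 ≤ t → 1 ≤ f t := by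
    intro t h
    have := hf.mono_le h
    omega
  have hmono' : ∀ t, f' t ≤ f' (t+1) := by
    intro t
    have hm := hf.mono t
    by_cases h1 : t0 ≤ t ∧ t ≤ t1 <;> by_cases h2 : t0 ≤ t+1 ∧ t+1 ≤ t1
    · rw [hin t h1.1 h1.2, hin (t+1) h2.1 h2.2]
      have := hfget t h1.1
      omega
    · rw [hin t h1.1 h1.2, hout (t+1) h2]
      omega
    · obtain rfl : t0 = t + 1 := by omega
      rw [hout t h1, hin (t+1) h2.1 h2.2]
      rw [show t + 1 - 1 = t from rfl] at hf01
      omega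
    · rw [hout t h1, hout (t+1) h2]
      exact hm
  have hconc' : ∀ t, f' (t+2) + f' t ≤ f' (t+1) + f' (t+1) := by
    intro t
    have hcc := hf.conc t
    have hm0 := hf.mono t
    have hm1 := hf.mono (t+1)
    rw [show t+1+1 = t+2 from rfl] at hm1
    by_cases c0 : t0 ≤ t ∧ t ≤ t1 <;> by_cases c1 : t0 ≤ t+1 ∧ t+1 ≤ t1 <;>
      by_cases c2 : t0 ≤ t+2 ∧ t+2 ≤ t1
    · -- all in
      rw [hin t c0.1 c0.2, hin (t+1) c1.1 c1.2, hin (t+2) c2.1 c2.2]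
      have := hfget t c0.1
      have := hfget (t+2) c2.1
      omega
    · -- c0, c1, ¬c2 : t+1 = t1
      obtain rfl : t1 = t + 1 := by omega
      rw [hin t c0.1 c0.2, hin (t+1) c1.1 c1.2, hout (t+2) c2]
      have h5 := (hsl1 (by omega)).2
      have hdd1 : dd f t = dd f t0 := hddlin t c0.1 (by omega)
      have e1 := hf.dd_add t
      have e2 := hf.dd_add (t+1)
      rw [show t+1+1 = t+2 from rfl] at e2
      have := hfget t c0.1
      omega
    · -- c0, ¬c1, c2 : impossible
      exact absurd (And.intro (by omega : t0 ≤ t+1) (by omega : t+1 ≤ t1)) c1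
    · -- c0, ¬c1, ¬c2 : t = t1
      obtain rfl : t = t1 := by omega
      rw [hin t c0.1 c0.2, hout (t+1) c1, hout (t+2) c2]
      omega
    · -- ¬c0, c1, c2 : t+1 = t0
      obtain rfl : t0 = t + 1 := by omega
      rw [hout t c0, hin (t+1) c1.1 c1.2, hin (t+2) c2.1 c2.2]
      rw [show t + 1 - 1 = t from rfl] at hmc0
      rw [show t+1+1 = t+2 from rfl] at hmc0
      have := hfget (t+2) (by omega)
      omega
    · -- ¬c0, c1, ¬c2 : t0 = t1 = t+1
      obtain rfl : t0 = t + 1 := by omega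
      obtain rfl : t1 = t + 1 := by omega
      rw [hout t c0, hin (t+1) c1.1 c1.2, hout (t+2) c2]
      have h6 := hsl2 rfl
      rw [show t + 1 - 1 = t from rfl] at h6
      have e1 := hf.dd_add t
      have e2 := hf.dd_add (t+1)
      rw [show t+1+1 = t+2 from rfl] at e2
      have := hfget (t+1) (by omega)
      omega
    · -- ¬c0, ¬c1, c2 : t+2 = t0
      obtain rfl : t0 = t + 2 := by omega
      rw [hout t c0, hout (t+1) c1, hin (t+2) c2.1 c2.2]
      omega
    · rw [hout t c0, hout (t+1) c1, hout (t+2) c2]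
      exact hcc
  have hgood' : GoodF n f' := by
    refine ⟨?_, hmono', hconc', ?_, ?_⟩
    · rw [hout 0 (by omega), hf.zero]
    · intro t; exact le_trans (hle' t) (hf.le_n t)
    · rw [hout n (by omega), hf.top]
  refine ⟨f', hgood', hle', ?_, ?_⟩
  · rw [hin t0 le_rfl ht01]; omega
  · intro g hg hgpok hgle
    have claim : ∀ k, t0 + k ≤ t1 → g (t0 + k) + 1 ≤ f (t0 + k) := by
      intro k
      induction k with
      | zero =>
        intro _
        simp only [Nat.add_zero]
        by_contra hcon
        push_neg at hcon
        have heq : g t0 = f t0 := le_antisymm (hgle t0) (by omega)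
        have hct := touch hc0 hgle heq
        have := hgpok t0 hct
        rw [heq] at this
        exact hw0 this
      | succ k ih =>
        intro hk1
        rw [show t0 + (k+1) = t0 + k + 1 from rfl] at hk1 ⊢
        by_cases hend : t0 + k + 1 = t1
        · by_contra hcon
          push_neg at hcon
          have heq : g (t0+k+1) = f (t0+k+1) := le_antisymm (hgle _) (by omega)
          have hct := touch (hend ▸ hc1) hgle heq
          have := hgpok _ hct
          rw [heq] at this
          rw [hend] at this
          exact hw1 this
        · have hklt : t0 + k + 1 < t1 := by omega
          have ihh := ih (by omega)
          by_contra hcon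
          push_neg at hcon
          have heq : g (t0+k+1) = f (t0+k+1) := le_antisymm (hgle _) (by omega)
          have hdd1 : dd f (t0 + k) = dd f t0 := hddlin _ (by omega) (by omega)
          have hdd2 : dd f (t0 + k + 1) = dd f t0 := hddlin _ (by omega) (by omega)
          have e1 := hf.dd_add (t0+k)
          have e2 := hf.dd_add (t0+k+1)
          have hcg : CornerF g (t0+k+1) := by
            unfold CornerF
            rw [show t0 + k + 1 - 1 = t0 + k from rfl]
            have hgle2 := hgle (t0+k+1+1)
            omega
          have hpk := hgpok _ hcg
          have hgeq : g (t0+k+1) + e * (t0+k+1) =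
              (f t0 + e * t0) + (k+1) * (dd f t0 + e) := by
            rw [heq]
            rw [show t0+k+1 = t0+(k+1) from rfl, hlin (k+1) (by omega)]
            ring
          rw [hgeq] at hpk
          have hev2 : Even ((k+1) * (dd f t0 + e)) := (hint (by omega)).mul_left _
          have : Even (f t0 + e * t0) := by
            rw [Nat.even_add] at hpk
            tauto
          exact hw0 this
    intro t
    by_cases hreg : t0 ≤ t ∧ t ≤ t1
    · have hcl := claim (t - t0) (by omega)
      rw [show t0 + (t - t0) = t by omega] at hcl
      rw [hin t hreg.1 hreg.2]
      omega
    · rw [hout t hreg]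
      exact hgle t

lemma main (e n : ℕ) : ∀ (μ : ℕ) (f : ℕ → ℕ), (∑ t ∈ Finset.range (n+1), f t) ≤ μ → GoodF n f →
    (∃ g, GoodF n g ∧ POK e g ∧ ∀ t, g t ≤ f t) →
    ∃ g, GoodF n g ∧ POK e g ∧ (∀ t, g t ≤ f t) ∧
      ∀ g', GoodF n g' → POK e g' → (∀ t, g' t ≤ f t) → ∀ t, g' t ≤ g t := by
  intro μ
  induction μ with
  | zero =>
    intro f hsum hf hne
    have h1 : f n ≤ ∑ t ∈ Finset.range (n+1), f t :=
      Finset.single_le_sum (fun i _ => Nat.zero_le _) (Finset.self_mem_range_succ n)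
    have hn0 : n = 0 := by have := hf.top; omega
    have hfz : ∀ t, f t = 0 := fun t => by have := hf.le_n t; omega
    have hpok : POK e f := by
      intro t hc
      unfold CornerF at hc
      rw [hfz (t-1), hfz t, hfz (t+1)] at hc
      omega
    exact ⟨f, hf, hpok, fun t => le_rfl, fun g' _ _ h => h⟩
  | succ μ ih =>
    intro f hsum hf hne
    by_cases hP : POK e f
    · exact ⟨f, hf, hP, fun t => le_rfl, fun g' _ _ h => h⟩
    obtain ⟨g₀, hg₀good, hg₀pok, hg₀le⟩ := hne
    have hWex : ∃ t, CornerF f t ∧ ¬ Even (f t + e * t) := by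
      unfold POK at hP; push_neg at hP; exact hP
    classical
    set t0 := Nat.find hWex with ht0def
    obtain ⟨hc0, hw0⟩ : CornerF f t0 ∧ ¬ Even (f t0 + e * t0) := Nat.find_spec hWex
    have hmin : ∀ u, u < t0 → CornerF f u → Even (f u + e * u) := by
      intro u hu hcu
      have := Nat.find_min hWex hu
      tauto
    have ht0pos : 1 ≤ t0 := by
      rcases Nat.eq_zero_or_pos t0 with h | h
      · exact absurd (h ▸ hc0) (not_corner_zero hf)
      · exact h
    have hodd : Odd (dd f (t0 - 1) + e) := first_wrong e hf hc0 hw0 hmin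
    have hsv : dd f t0 < dd f (t0 - 1) := by
      have h := corner_succ_iff hf (t0 - 1)
      rw [show t0 - 1 + 1 = t0 by omega] at h
      exact h.mp hc0
    have hstep : ∃ t1, t0 ≤ t1 ∧ (¬ Even (f t1 + e * t1)) ∧ CornerF f t1 ∧
        (∀ k, t0 + k ≤ t1 → f (t0 + k) = f t0 + k * dd f t0) ∧
        (t0 < t1 → Even (dd f t0 + e)) ∧
        (t0 < t1 → dd f t0 + 1 ≤ dd f (t0 - 1) ∧ dd f t1 + 1 ≤ dd f t0) ∧
        (t1 = t0 → dd f t0 + 2 ≤ dd f (t0 - 1)) := by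
      by_cases hB : dd f (t0 - 1) = dd f t0 + 1
      · -- drop exactly one
        have hint : Even (dd f t0 + e) := by
          rw [hB] at hodd
          rw [Nat.even_iff]
          rw [Nat.odd_iff] at hodd
          omega
        by_cases hs0 : dd f t0 = 0
        · -- impossible : contradiction with g₀
          exfalso
          have hEe : Even e := by
            rw [hB, hs0] at hodd
            rw [Nat.even_iff]
            rw [Nat.odd_iff] at hodd
            omega
          have hconstf : ∀ k, f (t0 + k) = f t0 := by
            intro k
            have := hf.flat t0 0 k (fun j _ => by
              have h1 : dd f (t0 + j) ≤ dd f t0 := hf.dd_anti (by omega)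
              omega)
            omega
          have hft0n : f t0 = n := by
            have h1 := hconstf n
            have h2 : f (t0 + n) = n := hf.stable (by omega)
            omega
          have hoddn : ¬ Even n := by
            intro hev
            apply hw0
            rw [hft0n]
            exact hev.add (hEe.mul_right t0)
          have hnex : ∃ t, g₀ t = n := ⟨n, hg₀good.top⟩
          set ts := Nat.find hnex with htsdef
          have hts : g₀ ts = n := Nat.find_spec hnex
          have htspos : 1 ≤ ts := by
            rcases Nat.eq_zero_or_pos ts with h | h
            · exfalso
              have := hts
              rw [h, hg₀good.zero] at this
              exact hoddn (by simp [← this])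
            · exact h
          have hlt : g₀ (ts - 1) < n := by
            have h1 : g₀ (ts - 1) ≠ n := Nat.find_min hnex (by omega)
            have h2 := hg₀good.le_n (ts - 1)
            omega
          have hup : g₀ (ts + 1) = n := by
            have h1 := hg₀good.mono ts
            have h2 := hg₀good.le_n (ts + 1)
            omega
          have hcs : CornerF g₀ ts := by
            unfold CornerF
            rw [hts, hup]
            omega
          have := hg₀pok ts hcs
          rw [hts] at this
          rcases Nat.even_add.mp this with h
          exact hoddn (h.mpr (hEe.mul_right ts))
        · -- find next corner t1
          have hex0 : ∃ w, t0 < w ∧ dd f w < dd f t0 := by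
            refine ⟨t0 + n + 1, by omega, ?_⟩
            have := hf.dd_stable (t := t0 + n + 1) (by omega)
            omega
          have hu := Nat.find_spec hex0
          set u := Nat.find hex0 with hudef
          have hcu : CornerF f u := by
            have hune : dd f (u - 1) > dd f u := by
              rcases Nat.lt_or_ge t0 (u - 1) with h | h
              · have hm := Nat.find_min hex0 (m := u - 1) (by omega)
                push_neg at hm
                have := hm h
                omega
              · have : u - 1 = t0 := by omega
                rw [this]
                omega
            have h := corner_succ_iff hf (u - 1)
            rw [show u - 1 + 1 = u by omega] at h
            exact h.mpr hune
          have hex1 : ∃ w, t0 < w ∧ CornerF f w := ⟨u, hu.1, hcu⟩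
          have ht1 := Nat.find_spec hex1
          set t1 := Nat.find hex1 with ht1def
          have hnc : ∀ w, t0 < w → w < t1 → ¬ CornerF f w := by
            intro w h1 h2 hcw
            have := Nat.find_min hex1 h2
            tauto
          have hconst : ∀ j, t0 + j < t1 → dd f (t0 + j) = dd f t0 :=
            hf.dd_const_of_no_corner hnc
          have hlin : ∀ k, t0 + k ≤ t1 → f (t0 + k) = f t0 + k * dd f t0 := by
            intro k hk
            exact hf.flat t0 (dd f t0) k (fun j hj => hconst j (by omega))
          have hw1 : ¬ Even (f t1 + e * t1) := by
            intro hev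
            apply hw0
            have hft1 : f t1 = f t0 + (t1 - t0) * dd f t0 := by
              have := hlin (t1 - t0) (by omega)
              rw [show t0 + (t1 - t0) = t1 by omega] at this
              exact this
            have hkey : f t1 + e * t1 = (f t0 + e * t0) + (t1 - t0) * (dd f t0 + e) := by
              have h2 : e * t1 = e * t0 + e * (t1 - t0) := by
                rw [← Nat.mul_add]
                congr 1
                omega
              rw [hft1, h2]
              ring
            rw [hkey] at hev
            have hev2 : Even ((t1 - t0) * (dd f t0 + e)) := hint.mul_left _
            rcases Nat.even_add.mp hev with h
            exact h.mpr hev2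
          have hdt1 : dd f t1 + 1 ≤ dd f t0 := by
            have h := corner_succ_iff hf (t1 - 1)
            rw [show t1 - 1 + 1 = t1 by omega] at h
            have h2 := h.mp ht1.2
            have h3 : dd f (t1 - 1) = dd f t0 := by
              rcases Nat.lt_or_ge t0 (t1 - 1) with hh | hh
              · have := hconst (t1 - 1 - t0) (by omega)
                rw [show t0 + (t1 - 1 - t0) = t1 - 1 by omega] at this
                exact this
              · have : t1 - 1 = t0 := by omega
                rw [this]
            omega
          exact ⟨t1, by omega, hw1, ht1.2, hlin, fun _ => hint,
            fun _ => ⟨by omega, hdt1⟩, fun h => absurd h (by omega)⟩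
      · -- drop at least two : t1 = t0
        refine ⟨t0, le_rfl, hw0, hc0, ?_, fun h => absurd h (lt_irrefl _),
          fun h => absurd h (lt_irrefl _), fun _ => by omega⟩
        intro k hk
        have : k = 0 := by omega
        subst this
        simp
    obtain ⟨t1, ht01, hw1, hc1, hlin, hint, hsl1, hsl2⟩ := hstep
    obtain ⟨f', hf'good, hf'le, hf'lt, hf'max⟩ :=
      step e hf ht0pos ht01 hc0 hw0 hw1 hc1 hlin hint hsl1 hsl2
    have hsum' : (∑ t ∈ Finset.range (n+1), f' t) ≤ μ := by
      have hlt : (∑ t ∈ Finset.range (n+1), f' t) < ∑ t ∈ Finset.range (n+1), f t :=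
        Finset.sum_lt_sum (fun i _ => hf'le i)
          ⟨t0, Finset.mem_range.mpr (by have := corner_le_n hf hc0; omega), hf'lt⟩
      omega
    obtain ⟨g, hggood, hgpok, hgle', hgmax⟩ := ih f' hsum' hf'good
      ⟨g₀, hg₀good, hg₀pok, hf'max g₀ hg₀good hg₀pok hg₀le⟩
    exact ⟨g, hggood, hgpok, fun t => le_trans (hgle' t) (hf'le t),
      fun g' h1 h2 h3 => hgmax g' h1 h2 (hf'max g' h1 h2 h3)⟩

/-! ### Lists and partial sums -/

def FL (l : List ℕ) (t : ℕ) : ℕ := (l.take t).sum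

lemma FL_succ (l : List ℕ) (t : ℕ) : FL l (t+1) = FL l t + l.getD t 0 := by
  unfold FL
  rcases Nat.lt_or_ge t l.length with h | h
  · rw [List.take_succ, List.sum_append, List.getElem?_eq_getElem h,
      List.getD_eq_getElem l 0 h]
    simp
  · rw [List.take_of_length_le h, List.take_of_length_le (by omega),
      List.getD_eq_default l 0 h]
    simp

lemma getD_anti {l : List ℕ} (hs : l.Pairwise (· ≥ ·)) {a b : ℕ} (hab : a ≤ b) :
    l.getD b 0 ≤ l.getD a 0 := by
  rcases Nat.lt_or_ge b l.length with hb | hb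
  · have ha : a < l.length := lt_of_le_of_lt hab hb
    rw [List.getD_eq_getElem l 0 hb, List.getD_eq_getElem l 0 ha]
    rcases eq_or_lt_of_le hab with rfl | h
    · exact le_rfl
    · have := List.pairwise_iff_get.mp hs ⟨a, ha⟩ ⟨b, hb⟩ h
      simpa using this
  · rw [List.getD_eq_default l 0 hb]
    exact Nat.zero_le _

lemma getD_mem_pos {l : List ℕ} (h0 : 0 ∉ l) {t : ℕ} (ht : t < l.length) :
    1 ≤ l.getD t 0 := by
  rw [List.getD_eq_getElem l 0 ht]
  have : l[t] ∈ l := List.getElem_mem ht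
  rcases Nat.eq_zero_or_pos l[t] with h | h
  · exact absurd (h ▸ this) h0
  · exact h

lemma length_le_sum {l : List ℕ} (h0 : 0 ∉ l) : l.length ≤ l.sum := by
  induction l with
  | nil => simp
  | cons a l ih =>
    simp only [List.mem_cons, not_or] at h0
    have h1 := ih h0.2
    have h2 : a ≠ 0 := fun h => h0.1 h.symm
    simp only [List.length_cons, List.sum_cons]
    omega

lemma goodF_of_list {l : List ℕ} (hs : l.Pairwise (· ≥ ·)) (h0 : 0 ∉ l) :
    GoodF l.sum (FL l) := by
  have hmono : ∀ t, FL l t ≤ FL l (t+1) := by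
    intro t
    rw [FL_succ]
    omega
  refine ⟨rfl, hmono, ?_, ?_, ?_⟩
  · intro t
    have e1 := FL_succ l t
    have e2 := FL_succ l (t+1)
    rw [show t+1+1 = t+2 from rfl] at e2
    have := getD_anti hs (show t ≤ t + 1 by omega)
    omega
  · intro t
    have := List.sum_take_add_sum_drop l t
    unfold FL
    omega
  · unfold FL
    rw [List.take_of_length_le (length_le_sum h0)]

lemma FL_stable {l : List ℕ} {t : ℕ} (h : l.length ≤ t) : FL l t = l.sum := by
  unfold FL
  rw [List.take_of_length_le h]

lemma FL_lt_succ_iff {l : List ℕ} (h0 : 0 ∉ l) (t : ℕ) :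
    t < l.length ↔ FL l t < FL l (t+1) := by
  rw [FL_succ]
  constructor
  · intro h
    have := getD_mem_pos h0 h
    omega
  · intro h
    by_contra hc
    push_neg at hc
    rw [List.getD_eq_default l 0 hc] at h
    omega

lemma list_eq_of_FL_eq {l1 l2 : List ℕ} (hs1 : l1.Pairwise (· ≥ ·)) (hs2 : l2.Pairwise (· ≥ ·))
    (h01 : 0 ∉ l1) (h02 : 0 ∉ l2) (h : ∀ t, FL l1 t = FL l2 t) : l1 = l2 := by
  have hlen : l1.length = l2.length := by
    by_contra hc
    rcases Nat.lt_or_ge l1.length l2.length with hl | hl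
    · have h1 := (FL_lt_succ_iff h02 l1.length).mp hl
      rw [← h l1.length, ← h (l1.length + 1)] at h1
      have := (FL_lt_succ_iff h01 l1.length).mpr h1
      omega
    · rcases Nat.lt_or_ge l2.length l1.length with hl2 | hl2
      · have h1 := (FL_lt_succ_iff h01 l2.length).mp hl2
        rw [h l2.length, h (l2.length + 1)] at h1
        have := (FL_lt_succ_iff h02 l2.length).mpr h1
        omega
      · omega
  apply List.ext_getElem hlen
  intro i hi1 hi2
  have e1 := FL_succ l1 i
  have e2 := FL_succ l2 i
  rw [List.getD_eq_getElem l1 0 hi1] at e1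
  rw [List.getD_eq_getElem l2 0 hi2] at e2
  rw [h i, h (i+1)] at e1
  omega

lemma exists_list_of_goodF {f : ℕ → ℕ} (hf : GoodF n f) :
    ∃ l : List ℕ, l.Pairwise (· ≥ ·) ∧ 0 ∉ l ∧ (∀ t, FL l t = f t) := by
  classical
  have hex : ∃ k, dd f k = 0 := ⟨n, hf.dd_stable le_rfl⟩
  set m := Nat.find hex with hmdef
  have hm0 : dd f m = 0 := Nat.find_spec hex
  have hmin : ∀ u, u < m → dd f u ≠ 0 := fun u hu => Nat.find_min hex hu
  refine ⟨(List.range m).map (dd f), ?_, ?_, ?_⟩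
  · rw [List.pairwise_map]
    have := List.pairwise_lt_range (n := m)
    exact this.imp (fun hab => hf.dd_anti (le_of_lt hab))
  · intro hmem
    rw [List.mem_map] at hmem
    obtain ⟨u, hu1, hu2⟩ := hmem
    rw [List.mem_range] at hu1
    exact hmin u hu1 hu2
  · have hlen : ((List.range m).map (dd f)).length = m := by simp
    have hgetD : ∀ t, t < m → ((List.range m).map (dd f)).getD t 0 = dd f t := by
      intro t ht
      rw [List.getD_eq_getElem _ 0 (by omega)]
      simp
    have hupto : ∀ t, t ≤ m → FL ((List.range m).map (dd f)) t = f t := by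
      intro t
      induction t with
      | zero => intro _; rw [hf.zero]; rfl
      | succ t ih =>
        intro ht
        rw [FL_succ, ih (by omega), hgetD t (by omega), ← hf.dd_add]
    have hconstf : ∀ k, f (m + k) = f m := by
      intro k
      have := hf.flat m 0 k (fun j _ => by
        have h1 : dd f (m + j) ≤ dd f m := hf.dd_anti (by omega)
        omega)
      omega
    intro t
    rcases le_or_gt t m with h | h
    · exact hupto t h
    · rw [FL_stable (by omega)]
      have h1 : f t = f m := by
        have := hconstf (t - m)
        rw [show m + (t - m) = t by omega] at this
        exact this
      have h2 := hupto m le_rfl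
      rw [FL_stable (by omega)] at h2
      omega

/-! ### Multisets -/

def dlist (M : Multiset ℕ) : List ℕ := (M.sort (· ≤ ·)).reverse

lemma dlist_sorted (M : Multiset ℕ) : (dlist M).Pairwise (· ≥ ·) := by
  unfold dlist
  rw [List.pairwise_reverse]
  exact (Multiset.pairwise_sort M (· ≤ ·)).imp (fun h => h)

lemma coe_dlist (M : Multiset ℕ) : ((dlist M : List ℕ) : Multiset ℕ) = M := by
  unfold dlist
  rw [Multiset.coe_reverse, Multiset.sort_eq]

lemma sumLargest_eq_FL (M : Multiset ℕ) (t : ℕ) : sumLargest M t = FL (dlist M) t := rfl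

lemma sort_coe_of_sorted {l : List ℕ} (hs : l.Pairwise (· ≥ ·)) :
    Multiset.sort (↑l : Multiset ℕ) (· ≤ ·) = l.reverse := by
  refine (fun h1 h2 h3 => List.Perm.eq_of_pairwise' (r := (· ≤ ·)) h2 h3 h1) ?_ ?_ ?_
  · have h1 : (Multiset.sort (l : Multiset ℕ) (· ≤ ·)).Perm l :=
      Multiset.coe_eq_coe.mp (Multiset.sort_eq _ _)
    exact h1.trans l.reverse_perm.symm
  · exact Multiset.pairwise_sort _ _
  · rw [List.pairwise_reverse]
    exact hs

lemma sumLargest_coe {l : List ℕ} (hs : l.Pairwise (· ≥ ·)) (t : ℕ) :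
    sumLargest (↑l) t = FL l t := by
  unfold sumLargest
  rw [sort_coe_of_sorted hs, List.reverse_reverse]
  rfl

lemma dd_FL (l : List ℕ) (t : ℕ) : dd (FL l) t = l.getD t 0 := by
  unfold dd
  rw [FL_succ]
  omega

lemma count_eq_card_filter (l : List ℕ) (v : ℕ) :
    l.count v = ((Finset.range l.length).filter (fun u => l.getD u 0 = v)).card := by
  classical
  induction l using List.reverseRecOn with
  | nil => simp
  | append_singleton l a ih =>
    have hgd : ∀ u, u < l.length → (l ++ [a]).getD u 0 = l.getD u 0 := fun u hu =>
      List.getD_append _ _ _ _ hu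
    have hga : (l ++ [a]).getD l.length 0 = a := by
      rw [List.getD_append_right _ _ _ _ le_rfl]
      simp
    have hcnt1 : ([a] : List ℕ).count v = if a = v then 1 else 0 := by
      by_cases h : a = v
      · subst h
        simp
      · rw [if_neg h, List.count_eq_zero]
        simp only [List.mem_singleton]
        exact fun hh => h hh.symm
    rw [List.count_append, List.length_append]
    simp only [List.length_cons, List.length_nil, Nat.zero_add]
    rw [Finset.range_add_one, Finset.filter_insert]
    have hfc : Finset.filter (fun u => (l ++ [a]).getD u 0 = v) (Finset.range l.length)
        = Finset.filter (fun u => l.getD u 0 = v) (Finset.range l.length) := by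
      apply Finset.filter_congr
      intro u hu
      rw [Finset.mem_range] at hu
      rw [hgd u hu]
    by_cases hav : a = v
    · rw [if_pos (by rw [hga]; exact hav)]
      rw [Finset.card_insert_of_notMem (by simp), hfc, ← ih, hcnt1, if_pos hav]
    · rw [if_neg (by rw [hga]; exact hav), hfc, ← ih, hcnt1, if_neg hav]
      omega

lemma typeL_iff_POK {l : List ℕ} (hs : l.Pairwise (· ≥ ·)) (h0 : 0 ∉ l) (e : ℕ) :
    (∀ v, Odd (v + e) → Even (l.count v)) ↔ POK e (FL l) := by
  classical
  have hgood := goodF_of_list hs h0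
  set f := FL l with hfdef
  have hddl : ∀ t, dd f t = l.getD t 0 := dd_FL l
  have hlen : ∀ u, l.length ≤ u → l.getD u 0 = 0 := fun u hu => List.getD_eq_default _ _ hu
  have hlen' : ∀ u, 1 ≤ l.getD u 0 → u < l.length := by
    intro u h
    by_contra hc
    push_neg at hc
    rw [hlen u hc] at h
    omega
  constructor
  · intro hT
    have claim : ∀ t, (t = 0 ∨ CornerF f t) → Even (f t + e * t) := by
      intro t
      induction t using Nat.strong_induction_on with
      | _ t ih =>
        intro ht
        rcases ht with rfl | hc
        · rw [hgood.zero]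
          simp
        · have ht1 : 1 ≤ t := by
            rcases Nat.eq_zero_or_pos t with h | h
            · exact absurd (h ▸ hc) (not_corner_zero hgood)
            · exact h
          set a := Nat.findGreatest (CornerF f) (t - 1) with hadef
          have hale : a ≤ t - 1 := Nat.findGreatest_le _
          have hQ : a = 0 ∨ CornerF f a := by
            by_cases hex : ∃ u, 0 < u ∧ u ≤ t - 1 ∧ CornerF f u
            · obtain ⟨u, _, hu2, hu3⟩ := hex
              exact Or.inr (Nat.findGreatest_spec hu2 hu3)
            · left
              rw [hadef, Nat.findGreatest_eq_zero_iff]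
              intro m hm1 hm2 hm3
              exact hex ⟨m, hm1, hm2, hm3⟩
          have hnc : ∀ u, a < u → u < t → ¬ CornerF f u := by
            intro u h1 h2 hcu
            exact Nat.findGreatest_is_greatest h1 (by omega) hcu
          have hconst : ∀ j, a + j < t → dd f (a + j) = dd f a :=
            hgood.dd_const_of_no_corner hnc
          set v := dd f a with hvdef
          have hdt : dd f (t - 1) = v := by
            have := hconst (t - 1 - a) (by omega)
            rw [show a + (t - 1 - a) = t - 1 by omega] at this
            exact this
          have hvpos : 1 ≤ v := by
            have h1 := (corner_succ_iff hgood (t-1))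
            rw [show t - 1 + 1 = t by omega] at h1
            have := h1.mp hc
            omega
          have hflat : f t = f a + (t - a) * v := by
            have := hgood.flat a v (t - a) (fun j hj => hconst j (by omega))
            rw [show a + (t - a) = t by omega] at this
            exact this
          have hIa : Even (f a + e * a) := ih a (by omega) hQ
          -- the count of v is t - a
          have hcount : l.count v = t - a := by
            rw [count_eq_card_filter]
            have : Finset.filter (fun u => l.getD u 0 = v) (Finset.range l.length)
                = Finset.Ico a t := by
              apply Finset.ext
              intro u
              rw [Finset.mem_filter, Finset.mem_range, Finset.mem_Ico]
              constructor
              · rintro ⟨hu1, hu2⟩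
                constructor
                · by_contra hua
                  push_neg at hua
                  -- u < a, so a > 0, corner at a, getD (a-1) > v
                  have ha0 : 0 < a := by omega
                  have hca : CornerF f a := by
                    rcases hQ with h | h
                    · omega
                    · exact h
                  have hia := (corner_succ_iff hgood (a-1))
                  rw [show a - 1 + 1 = a by omega] at hia
                  have h2 : dd f a < dd f (a-1) := hia.mp hca
                  have h3 : l.getD u 0 ≥ l.getD (a-1) 0 := getD_anti hs (by omega)
                  rw [← hddl u, ← hddl (a-1)] at h3
                  rw [← hddl u] at hu2
                  omega
                · by_contra hut
                  push_neg at hut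
                  -- u ≥ t : getD u ≤ dd f t < v
                  have hia := (corner_succ_iff hgood (t-1))
                  rw [show t - 1 + 1 = t by omega] at hia
                  have h2 : dd f t < dd f (t-1) := hia.mp hc
                  have h3 : l.getD u 0 ≤ l.getD t 0 := getD_anti hs (by omega)
                  rw [← hddl u, ← hddl t] at h3
                  rw [← hddl u] at hu2
                  omega
              · rintro ⟨hu1, hu2⟩
                have h2 : dd f u = v := by
                  have h3 := hconst (u - a) (by omega)
                  rw [show a + (u - a) = u by omega] at h3
                  exact h3
                have h4 : l.getD u 0 = v := by rw [← h2]; exact (hddl u).symm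
                exact ⟨hlen' u (by omega), h4⟩
            rw [this, Nat.card_Ico]
          -- assemble parity
          have hkey : f t + e * t = (f a + e * a) + (v + e) * (t - a) := by
            have h2 : e * t = e * a + e * (t - a) := by
              rw [← Nat.mul_add]
              congr 1
              omega
            rw [hflat, h2]
            ring
          rw [hkey]
          rcases Nat.even_or_odd (v + e) with hve | hve
          · exact hIa.add (hve.mul_right _)
          · have := hT v hve
            rw [hcount] at this
            exact hIa.add (this.mul_left _)
    intro t hc
    exact claim t (Or.inr hc)
  · intro hP v hv
    by_cases hcnt : l.count v = 0
    · simp [hcnt]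
    have hvmem : v ∈ l := by
      rw [← List.count_pos_iff]
      omega
    have hvpos : 1 ≤ v := by
      rcases Nat.eq_zero_or_pos v with h | h
      · exact absurd (h ▸ hvmem) h0
      · exact h
    set I := Finset.filter (fun u => l.getD u 0 = v) (Finset.range l.length) with hIdef
    have hIne : I.Nonempty := by
      rw [← Finset.card_pos, ← count_eq_card_filter]
      omega
    set a := I.min' hIne with hadef
    set b := I.max' hIne + 1 with hbdef
    have hamem : a ∈ I := I.min'_mem hIne
    have hbmem : b - 1 ∈ I := by
      rw [hbdef]
      simpa using I.max'_mem hIne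
    have hab : a ≤ b - 1 := I.min'_le _ hbmem
    obtain ⟨halen, hagd⟩ := Finset.mem_filter.mp hamem |>.imp (fun h => Finset.mem_range.mp h) id
    obtain ⟨hblen, hbgd⟩ := Finset.mem_filter.mp hbmem |>.imp (fun h => Finset.mem_range.mp h) id
    have hIco : ∀ u, a ≤ u → u < b → u ∈ I := by
      intro u h1 h2
      have h3 : l.getD u 0 ≤ v := by
        rw [← hagd]
        exact getD_anti hs h1
      have h4 : v ≤ l.getD u 0 := by
        rw [← hbgd]
        exact getD_anti hs (by omega)
      rw [hIdef, Finset.mem_filter, Finset.mem_range]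
      exact ⟨hlen' u (by omega), by omega⟩
    have hIeq : I = Finset.Ico a b := by
      apply Finset.ext
      intro u
      rw [Finset.mem_Ico]
      constructor
      · intro hu
        have h1 := I.min'_le u hu
        have h2 := I.le_max' u hu
        constructor
        · exact h1
        · omega
      · rintro ⟨h1, h2⟩
        exact hIco u h1 h2
    have hcount : l.count v = b - a := by
      rw [count_eq_card_filter, ← hIdef, hIeq, Nat.card_Ico]
    -- corners at a (or a = 0) and at b
    have hdda : dd f a = v := by rw [hddl a]; exact hagd
    have hddb1 : dd f (b-1) = v := by rw [hddl (b-1)]; exact hbgd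
    have hcb : CornerF f b := by
      have hddb : dd f b < v := by
        rw [hddl b]
        rcases Nat.lt_or_ge b l.length with h | h
        · have h2 : b ∉ I := by
            rw [hIeq, Finset.mem_Ico]
            omega
          rw [hIdef, Finset.mem_filter, Finset.mem_range] at h2
          push_neg at h2
          have h3 := h2 h
          have h4 : l.getD b 0 ≤ l.getD (b-1) 0 := getD_anti hs (by omega)
          rw [← hddl (b-1)] at h4
          omega
        · rw [hlen b h]
          omega
      have hia := (corner_succ_iff hgood (b-1))
      rw [show b - 1 + 1 = b by omega] at hia
      exact hia.mpr (by omega)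
    have hEb : Even (f b + e * b) := hP b hcb
    have hEa : Even (f a + e * a) := by
      rcases Nat.eq_zero_or_pos a with h | h
      · rw [h, hgood.zero]
        simp
      · have hca : CornerF f a := by
          have ham1 : a - 1 ∉ I := by
            intro hmem
            have := I.min'_le _ hmem
            omega
          rw [hIdef, Finset.mem_filter, Finset.mem_range] at ham1
          push_neg at ham1
          have h2 : l.getD (a-1) 0 ≠ v := ham1 (by omega)
          have h3 : l.getD a 0 ≤ l.getD (a-1) 0 := getD_anti hs (by omega)
          have hia := (corner_succ_iff hgood (a-1))
          rw [show a - 1 + 1 = a by omega] at hia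
          apply hia.mpr
          rw [hddl a, hddl (a-1)]
          rw [hagd] at h3 ⊢
          omega
        exact hP a hca
    have hflat : f b = f a + (b - a) * v := by
      have := hgood.flat a v (b - a) (fun j hj => by
        have := hIco (a + j) (by omega) (by omega)
        rw [hIdef, Finset.mem_filter] at this
        rw [hddl (a+j)]
        exact this.2)
      rw [show a + (b - a) = b by omega] at this
      exact this
    have hkey : f b + e * b = (f a + e * a) + (v + e) * (b - a) := by
      have h2 : e * b = e * a + e * (b - a) := by
        rw [← Nat.mul_add]
        congr 1
        omega
      rw [hflat, h2]
      ring
    rw [hkey] at hEb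
    have hprod : Even ((v + e) * (b - a)) := by
      rcases Nat.even_add.mp hEb with h
      tauto
    rw [hcount]
    rcases Nat.even_mul.mp hprod with h | h
    · rw [Nat.even_iff] at h
      rw [Nat.odd_iff] at hv
      omega
    · exact h

lemma not_mem_dlist {M : Multiset ℕ} (h0 : 0 ∉ M) : 0 ∉ dlist M := fun h =>
  h0 (by rw [← coe_dlist M]; exact Multiset.mem_coe.mpr h)

lemma sumLargest_fun_eq (M : Multiset ℕ) : sumLargest M = FL (dlist M) :=
  funext (sumLargest_eq_FL M)

lemma goodF_sumLargest {M : Multiset ℕ} (h0 : 0 ∉ M) (hsum : M.sum = n) :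
    GoodF n (sumLargest M) := by
  rw [sumLargest_fun_eq M]
  have h1 := goodF_of_list (dlist_sorted M) (not_mem_dlist h0)
  have h2 : (dlist M).sum = M.sum := by
    conv_rhs => rw [← coe_dlist M]
    rw [Multiset.sum_coe]
  rwa [h2, hsum] at h1

lemma count_dlist (M : Multiset ℕ) (v : ℕ) : M.count v = (dlist M).count v := by
  conv_lhs => rw [← coe_dlist M]
  exact Multiset.coe_count _ _

lemma multiset_eq_of_sumLargest_eq {M N : Multiset ℕ} (h0M : 0 ∉ M) (h0N : 0 ∉ N)
    (h : ∀ t, sumLargest M t = sumLargest N t) : M = N := by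
  have h1 : dlist M = dlist N :=
    list_eq_of_FL_eq (dlist_sorted M) (dlist_sorted N) (not_mem_dlist h0M) (not_mem_dlist h0N)
      (fun t => by rw [← sumLargest_eq_FL, ← sumLargest_eq_FL]; exact h t)
  rw [← coe_dlist M, ← coe_dlist N, h1]

end Stmt6

open Stmt6 in
theorem stmt_6 (ε : ℤ) (hε : ε = 1 ∨ ε = -1) (n : ℕ) (p : Multiset ℕ)
    (hp : p.sum = n) (hp0 : 0 ∉ p)
    (hne : ∃ q : Multiset ℕ, q.sum = n ∧ 0 ∉ q ∧ IsTypeEps ε q ∧ Dom p q) :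
    ∃! q : Multiset ℕ, (q.sum = n ∧ 0 ∉ q ∧ IsTypeEps ε q ∧ Dom p q) ∧
      ∀ q' : Multiset ℕ, q'.sum = n → 0 ∉ q' → IsTypeEps ε q' → Dom p q' → Dom q q' := by
  classical
  set e : ℕ := if ε = 1 then 1 else 0 with hedef
  have hsign : ∀ m : ℕ, ((-1 : ℤ) ^ m = ε) ↔ Odd (m + e) := by
    intro m
    rcases hε with rfl | rfl
    · have he1 : e = 1 := by rw [hedef]; simp
      rw [he1]
      constructor
      · intro h
        rcases Nat.even_or_odd m with he | ho
        · exact he.add_one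
        · rw [ho.neg_one_pow] at h
          norm_num at h
      · intro h
        have hme : Even m := by
          rw [Nat.odd_iff] at h
          rw [Nat.even_iff]
          omega
        exact hme.neg_one_pow
    · have he0 : e = 0 := by rw [hedef]; norm_num
      rw [he0, Nat.add_zero]
      constructor
      · intro h
        rcases Nat.even_or_odd m with he | ho
        · rw [he.neg_one_pow] at h
          norm_num at h
        · exact ho
      · intro h
        exact h.neg_one_pow
  have hbridge : ∀ M : Multiset ℕ, 0 ∉ M → (IsTypeEps ε M ↔ POK e (sumLargest M)) := by
    intro M h0
    rw [sumLargest_fun_eq M]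
    rw [← typeL_iff_POK (dlist_sorted M) (not_mem_dlist h0) e]
    constructor
    · intro hT v hv
      rw [← count_dlist]
      exact hT v ((hsign v).mpr hv)
    · intro hT m hm
      rw [count_dlist]
      exact hT m ((hsign m).mp hm)
  have hgoodp : GoodF n (sumLargest p) := goodF_sumLargest hp0 hp
  obtain ⟨q₀, h₀1, h₀2, h₀3, h₀4⟩ := hne
  have hgood₀ : GoodF n (sumLargest q₀) := goodF_sumLargest h₀2 h₀1
  have hpok₀ : POK e (sumLargest q₀) := (hbridge q₀ h₀2).mp h₀3
  obtain ⟨g, hggood, hgpok, hgle, hgmax⟩ :=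
    Stmt6.main e n (∑ t ∈ Finset.range (n+1), sumLargest p t) (sumLargest p) le_rfl hgoodp
      ⟨sumLargest q₀, hgood₀, hpok₀, h₀4⟩
  obtain ⟨lq, hlqs, hlq0, hlqFL⟩ := Stmt6.exists_list_of_goodF hggood
  set q : Multiset ℕ := (lq : Multiset ℕ) with hqdef
  have hql : ∀ t, sumLargest q t = g t := fun t => by
    rw [hqdef, sumLargest_coe hlqs t, hlqFL t]
  have hq0 : 0 ∉ q := fun h => hlq0 (Multiset.mem_coe.mp h)
  have hqsum : q.sum = n := by
    have h1 : FL lq (max n lq.length) = lq.sum := FL_stable (le_max_right _ _)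
    have h2 : g (max n lq.length) = n := hggood.stable (le_max_left _ _)
    have h3 := hlqFL (max n lq.length)
    rw [hqdef, Multiset.sum_coe]
    omega
  have hqfun : sumLargest q = g := funext hql
  have hqtype : IsTypeEps ε q := by
    rw [hbridge q hq0, hqfun]
    exact hgpok
  have hqdom : Dom p q := by
    intro t
    rw [hql t]
    exact hgle t
  have hqmax : ∀ q' : Multiset ℕ, q'.sum = n → 0 ∉ q' → IsTypeEps ε q' → Dom p q' →
      Dom q q' := by
    intro q' h1 h2 h3 h4
    intro t
    rw [hql t]
    exact hgmax (sumLargest q') (goodF_sumLargest h2 h1) ((hbridge q' h2).mp h3) h4 t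
  refine ⟨q, ⟨⟨hqsum, hq0, hqtype, hqdom⟩, hqmax⟩, ?_⟩
  rintro q' ⟨⟨h1, h2, h3, h4⟩, hmax'⟩
  have d1 : Dom q q' := hqmax q' h1 h2 h3 h4
  have d2 : Dom q' q := hmax' q hqsum hq0 hqtype hqdom
  exact multiset_eq_of_sumLargest_eq h2 hq0 (fun t => le_antisymm (d1 t) (d2 t))
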